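/- arXiv:2203.09607 — 5 statements merged into one kernel-verified Lean document; each statement's English description precedes it below -/
import Mathlib

section
/- Let m ≥ 1, γ > 0 and a_1, …, a_m ∈ ℝ, and set ā = (1/m) Σ_{i=1}^m a_i. Assume a_i − ā ≥ −γ for every i. Then max over p in the probability simplex Δ_m of [ Σ_{i=1}^m p_i a_i − (γ m / 2) Σ_{i=1}^m (p_i − 1/m)² ] equals ā + (1/(2γm)) Σ_{i=1}^m (a_i − ā)², and this maximum is attained at p*_i = (1/m) · (1 + (a_i − ā)/γ). In particular the optimal value equals the finite-sum composite expression (1/m) Σ_{i=1}^m a_i + (1/(2γm)) Σ_{i=1}^m a_i² − (1/(2γ)) ( (1/m) Σ_{i=1}^m a_i )². -/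
open scoped BigOperators

/-- Claim 1 (χ²-divergence DRO inner maximization): if `aᵢ - ā ≥ -γ` for all `i`, the
maximum of `Σ pᵢ aᵢ - (γ m/2) Σ (pᵢ - 1/m)²` over the simplex is attained at
`p*ᵢ = (1/m)(1 + (aᵢ - ā)/γ)`, equals `ā + (1/(2γm)) Σ (aᵢ - ā)²`, and this value
equals the finite-sum composite expression. -/
theorem dro_chi_squared_claim (m : ℕ) (hm : 1 ≤ m) (γ : ℝ) (hγ : 0 < γ) (a : Fin m → ℝ)
    (abar : ℝ) (habar : abar = (1 / (m : ℝ)) * ∑ i, a i)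
    (ha : ∀ i, a i - abar ≥ -γ)
    (pstar : Fin m → ℝ)
    (hpstar : ∀ i, pstar i = (1 / (m : ℝ)) * (1 + (a i - abar) / γ)) :
    (∀ i, 0 ≤ pstar i) ∧ (∑ i, pstar i) = 1 ∧
      (∑ i, pstar i * a i) - (γ * m / 2) * ∑ i, (pstar i - 1 / (m : ℝ)) ^ 2 =
        abar + (1 / (2 * γ * m)) * ∑ i, (a i - abar) ^ 2 ∧
      (∀ p : Fin m → ℝ, (∀ i, 0 ≤ p i) → (∑ i, p i) = 1 →
        (∑ i, p i * a i) - (γ * m / 2) * ∑ i, (p i - 1 / (m : ℝ)) ^ 2 ≤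
          abar + (1 / (2 * γ * m)) * ∑ i, (a i - abar) ^ 2) ∧
      abar + (1 / (2 * γ * m)) * ∑ i, (a i - abar) ^ 2 =
        (1 / (m : ℝ)) * ∑ i, a i + (1 / (2 * γ * m)) * ∑ i, (a i) ^ 2 -
          (1 / (2 * γ)) * ((1 / (m : ℝ)) * ∑ i, a i) ^ 2 := by
  have hm0 : (m : ℝ) ≠ 0 := by positivity
  have hγ0 : (γ : ℝ) ≠ 0 := ne_of_gt hγ
  have hsum_a : ∑ i, a i = (m : ℝ) * abar := by
    rw [habar]; field_simp
  have hsum0 : ∑ i, (a i - abar) = 0 := by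
    rw [Finset.sum_sub_distrib, Finset.sum_const, Finset.card_univ, Fintype.card_fin,
      hsum_a, nsmul_eq_mul]; ring
  -- key decomposition, valid for any p with ∑ p = 1
  have key : ∀ p : Fin m → ℝ, (∑ i, p i) = 1 →
      (∑ i, p i * a i) - (γ * m / 2) * ∑ i, (p i - 1 / (m : ℝ)) ^ 2 =
        abar + (1 / (2 * γ * m)) * ∑ i, (a i - abar) ^ 2
          - (γ * m / 2) * ∑ i, (p i - pstar i) ^ 2 := by
    intro p hp
    have pt : ∀ i, p i * a i - (γ * m / 2) * (p i - 1 / (m : ℝ)) ^ 2 =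
        p i * abar + (a i - abar) / m + (1 / (2 * γ * m)) * (a i - abar) ^ 2
          - (γ * m / 2) * (p i - pstar i) ^ 2 := by
      intro i
      rw [hpstar i]
      field_simp
      ring
    calc (∑ i, p i * a i) - (γ * m / 2) * ∑ i, (p i - 1 / (m : ℝ)) ^ 2
        = ∑ i, (p i * a i - (γ * m / 2) * (p i - 1 / (m : ℝ)) ^ 2) := by
          rw [Finset.sum_sub_distrib, Finset.mul_sum]
      _ = ∑ i, (p i * abar + (a i - abar) / m + (1 / (2 * γ * m)) * (a i - abar) ^ 2
            - (γ * m / 2) * (p i - pstar i) ^ 2) :=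
          Finset.sum_congr rfl fun i _ => pt i
      _ = (∑ i, p i) * abar + (∑ i, (a i - abar)) / m
            + (1 / (2 * γ * m)) * ∑ i, (a i - abar) ^ 2
            - (γ * m / 2) * ∑ i, (p i - pstar i) ^ 2 := by
          rw [Finset.sum_sub_distrib, Finset.sum_add_distrib, Finset.sum_add_distrib,
            ← Finset.sum_mul, ← Finset.mul_sum, ← Finset.sum_div, ← Finset.mul_sum]
      _ = _ := by rw [hp, hsum0]; ring
  have hnn : ∀ i, 0 ≤ pstar i := by
    intro i
    rw [hpstar i]
    have h1 : (-1 : ℝ) ≤ (a i - abar) / γ := by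
      rw [le_div_iff₀ hγ]
      have := ha i
      linarith
    have h2 : (0 : ℝ) ≤ 1 + (a i - abar) / γ := by linarith
    positivity
  have hpsum : (∑ i, pstar i) = 1 := by
    have : ∑ i, pstar i = ∑ i, (1 / (m : ℝ) + (a i - abar) * (1 / (γ * m))) := by
      refine Finset.sum_congr rfl fun i _ => ?_
      rw [hpstar i]; field_simp
    rw [this, Finset.sum_add_distrib, ← Finset.sum_mul, hsum0, Finset.sum_const,
      Finset.card_univ, Fintype.card_fin, nsmul_eq_mul]
    field_simp; ring
  refine ⟨hnn, hpsum, ?_, ?_, ?_⟩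
  · rw [key pstar hpsum]
    have : ∑ i, (pstar i - pstar i) ^ 2 = 0 := by simp
    rw [this]; ring
  · intro p hp0 hp1
    rw [key p hp1]
    have h1 : 0 ≤ (γ * m / 2) * ∑ i, (p i - pstar i) ^ 2 := by positivity
    linarith
  · have hexp : ∑ i, (a i - abar) ^ 2 =
        ∑ i, (a i) ^ 2 - 2 * abar * ∑ i, a i + (m : ℝ) * abar ^ 2 := by
      have : ∀ i, (a i - abar) ^ 2 = (a i) ^ 2 - 2 * abar * a i + abar ^ 2 := by
        intro i; ring
      rw [Finset.sum_congr rfl fun i _ => this i, Finset.sum_add_distrib,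
        Finset.sum_sub_distrib, ← Finset.mul_sum, Finset.sum_const,
        Finset.card_univ, Fintype.card_fin, nsmul_eq_mul]
    rw [hexp, hsum_a, habar, hsum_a]
    field_simp
    ring
end

section
/- Let E be a finite-dimensional Euclidean (real inner product) space, let g : E → ℝ be convex and differentiable, let ρ > 0 and assume ‖∇g(y)‖ ≥ ρ for every y ∈ E with g(y) = 0. Let K = {y ∈ E : g(y) ≤ 0} be nonempty, let x ∈ E satisfy g(x) > 0, and let x̄ be the metric projection of x onto K (the unique nearest point of the closed convex set K to x). Then g(x) ≥ ρ ‖x − x̄‖. -/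
open InnerProductSpace Topology Filter Set

local notation "⟪" x ", " y "⟫" => @inner ℝ _ _ x y

lemma line_hasDerivAt' {E : Type*} [NormedAddCommGroup E] [InnerProductSpace ℝ E]
    [CompleteSpace E] (g : E → ℝ) (hdiff : Differentiable ℝ g) (y w : E) :
    HasDerivAt (fun t : ℝ => g (y + t • w)) ⟪gradient g y, w⟫ 0 := by
  have hc : HasDerivAt (fun t : ℝ => y + t • w) w 0 := by
    simpa using ((hasDerivAt_id (0:ℝ)).smul_const w).const_add y
  have h1 : HasFDerivAt g (toDual ℝ E (gradient g y)) (y + (0:ℝ) • w) := by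
    simpa using (hdiff (y + (0:ℝ) • w)).hasGradientAt.hasFDerivAt
  have := h1.comp_hasDerivAt (0:ℝ) hc
  simpa [toDual_apply_apply, Function.comp_def] using this

lemma slope_tendsto' {φ : ℝ → ℝ} {d : ℝ} (h : HasDerivAt φ d 0) :
    Tendsto (fun t : ℝ => (φ t - φ 0) / t) (𝓝[>] (0:ℝ)) (𝓝 d) := by
  have hs := hasDerivAt_iff_tendsto_slope.mp h
  have hle : 𝓝[>] (0:ℝ) ≤ 𝓝[≠] (0:ℝ) :=
    nhdsWithin_mono _ (fun t ht => ne_of_gt ht)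
  exact (hs.mono_left hle).congr (fun t => by simp [slope_def_field, div_eq_inv_mul])

/-- Distance-to-feasibility lemma: for convex differentiable `g` with `‖∇g‖ ≥ ρ` on the
boundary `{g = 0}`, any infeasible point `x` (with `g(x) > 0`) satisfies
`g(x) ≥ ρ ‖x - x̄‖` where `x̄` is the metric projection of `x` onto `K = {g ≤ 0}`. -/
theorem constraint_violation_lower_bounds_distance
    {E : Type*} [NormedAddCommGroup E] [InnerProductSpace ℝ E] [FiniteDimensional ℝ E]
    (g : E → ℝ) (hconv : ConvexOn ℝ Set.univ g) (hdiff : Differentiable ℝ g)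
    (ρ : ℝ) (hρ : 0 < ρ)
    (hgrad : ∀ y, g y = 0 → ρ ≤ ‖gradient g y‖)
    (K : Set E) (hK : K = {y | g y ≤ 0}) (hKne : K.Nonempty)
    (x : E) (hx : 0 < g x)
    (xbar : E) (hxbar : xbar ∈ K) (hproj : ∀ y ∈ K, ‖x - xbar‖ ≤ ‖x - y‖) :
    ρ * ‖x - xbar‖ ≤ g x := by
  set v := x - xbar with hv
  have hgxbar_le : g xbar ≤ 0 := by rw [hK] at hxbar; exact hxbar
  have hvne : v ≠ 0 := sub_ne_zero.mpr (by rintro rfl; linarith)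
  have hvpos : 0 < ‖v‖ := norm_pos_iff.mpr hvne
  -- Step A : g xbar = 0
  have hgxbar : g xbar = 0 := by
    by_contra hne
    have hlt : g xbar < 0 := lt_of_le_of_ne hgxbar_le hne
    have hcont : ContinuousAt (fun t : ℝ => g (xbar + t • v)) 0 :=
      (hdiff.continuous.comp (by continuity)).continuousAt
    have h1 : ∀ᶠ t in 𝓝[>] (0:ℝ), g (xbar + t • v) < 0 := by
      have h := hcont.tendsto
      simp only [zero_smul, add_zero] at h
      exact (h.mono_left nhdsWithin_le_nhds).eventually_lt_const hlt
    have h2 : ∀ᶠ t in 𝓝[>] (0:ℝ), t < 1 :=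
      eventually_nhdsWithin_of_eventually_nhds (tendsto_id.eventually_lt_const one_pos)
    obtain ⟨t, ⟨hgt, ht1⟩, ht0⟩ := ((h1.and h2).and self_mem_nhdsWithin).exists
    have ht0 : (0:ℝ) < t := ht0
    have hyK : xbar + t • v ∈ K := by rw [hK]; exact le_of_lt hgt
    have hnorm : ‖x - (xbar + t • v)‖ = (1 - t) * ‖v‖ := by
      have he : x - (xbar + t • v) = (1 - t) • v := by rw [hv]; module
      rw [he, norm_smul, Real.norm_eq_abs, abs_of_pos (by linarith)]
    have hp := hproj _ hyK
    rw [hnorm] at hp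
    nlinarith
  -- gradient at xbar
  set G := gradient g xbar with hG
  have hGρ : ρ ≤ ‖G‖ := hgrad xbar hgxbar
  have hGpos : 0 < ‖G‖ := lt_of_lt_of_le hρ hGρ
  have hGne : G ≠ 0 := norm_pos_iff.mp hGpos
  -- Step B : strict descent directions make nonpositive inner product with v
  have key : ∀ w : E, ⟪G, w⟫ < 0 → ⟪v, w⟫ ≤ 0 := by
    intro w hw
    have hs := slope_tendsto' (line_hasDerivAt' g hdiff xbar w)
    have h1 : ∀ᶠ t in 𝓝[>] (0:ℝ),
        (g (xbar + t • w) - g (xbar + (0:ℝ) • w)) / t < 0 := hs.eventually_lt_const hw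
    have h2 : ∀ᶠ t in 𝓝[>] (0:ℝ), ⟪v, w⟫ ≤ t * ‖w‖ ^ 2 / 2 := by
      filter_upwards [h1, self_mem_nhdsWithin] with t hslope ht0'
      have ht0 : (0:ℝ) < t := ht0'
      have hslope' : g (xbar + t • w) / t < 0 := by
        simpa [hgxbar] using hslope
      have hneg : g (xbar + t • w) < 0 := by
        by_contra hcon
        exact absurd hslope' (not_lt.mpr (div_nonneg (not_lt.mp hcon) ht0.le))
      have hyK : xbar + t • w ∈ K := by rw [hK]; exact le_of_lt hneg
      have hle := hproj _ hyK
      have hxe : x - (xbar + t • w) = v - t • w := by rw [hv]; module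
      rw [hxe] at hle
      have hsq : ‖v‖ ^ 2 ≤ ‖v - t • w‖ ^ 2 := by
        have := mul_self_le_mul_self (norm_nonneg v) hle
        nlinarith
      have hexp : ‖v - t • w‖ ^ 2 = ‖v‖ ^ 2 - 2 * (t * ⟪v, w⟫) + t ^ 2 * ‖w‖ ^ 2 := by
        rw [norm_sub_sq_real, real_inner_smul_right, norm_smul, Real.norm_eq_abs,
          mul_pow, sq_abs]
      nlinarith
    have hlim : Tendsto (fun t : ℝ => t * ‖w‖ ^ 2 / 2) (𝓝[>] (0:ℝ)) (𝓝 0) := by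
      have h : Tendsto (fun t : ℝ => t * ‖w‖ ^ 2 / 2) (𝓝 (0:ℝ)) (𝓝 (0 * ‖w‖ ^ 2 / 2)) :=
        ((tendsto_id.mul_const _).div_const _)
      simpa using h.mono_left nhdsWithin_le_nhds
    exact ge_of_tendsto hlim h2
  -- 0 ≤ ⟪G, v⟫
  have hvG : 0 ≤ ⟪G, v⟫ := by
    have h := key (-G) (by
      rw [inner_neg_right, real_inner_self_eq_norm_sq]
      nlinarith)
    rw [inner_neg_right] at h
    rw [real_inner_comm]
    linarith
  -- Step B' : weak descent directions too
  have key' : ∀ w : E, ⟪G, w⟫ ≤ 0 → ⟪v, w⟫ ≤ 0 := by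
    intro w hw
    have : ∀ ε > (0:ℝ), ⟪v, w⟫ ≤ 0 + ε := by
      intro ε hε
      set δ := ε / (|⟪v, G⟫| + 1) with hδdef
      have hden : (0:ℝ) < |⟪v, G⟫| + 1 := by positivity
      have hδ : 0 < δ := div_pos hε hden
      have h := key (w - δ • G) (by
        rw [inner_sub_right, real_inner_smul_right, real_inner_self_eq_norm_sq]
        have hpos : 0 < δ * ‖G‖ ^ 2 := by positivity
        linarith)
      rw [inner_sub_right, real_inner_smul_right] at h
      have hδε : δ * (|⟪v, G⟫| + 1) = ε := div_mul_cancel₀ _ (ne_of_gt hden)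
      have habs : ⟪v, G⟫ ≤ |⟪v, G⟫| := le_abs_self _
      nlinarith
    linarith [le_of_forall_pos_le_add this]
  -- Cauchy–Schwarz is tight: ⟪G, v⟫ ≥ ‖G‖‖v‖
  have hsq : ‖G‖ ^ 2 * ‖v‖ ^ 2 ≤ ⟪G, v⟫ ^ 2 := by
    have h0 : ⟪G, ‖G‖ ^ 2 • v - ⟪G, v⟫ • G⟫ ≤ 0 := by
      rw [inner_sub_right, real_inner_smul_right, real_inner_smul_right,
        real_inner_self_eq_norm_sq]
      ring_nf
      exact le_refl _
    have h := key' _ h0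
    rw [inner_sub_right, real_inner_smul_right, real_inner_smul_right,
      real_inner_self_eq_norm_sq] at h
    have hcomm : ⟪v, G⟫ = ⟪G, v⟫ := real_inner_comm G v
    nlinarith
  have hGv : ρ * ‖v‖ ≤ ⟪G, v⟫ := by
    nlinarith [mul_le_mul_of_nonneg_right hGρ (norm_nonneg v), mul_pos hGpos hvpos,
      mul_nonneg hρ.le (norm_nonneg v)]
  -- Step D : convexity gives ⟪G, v⟫ ≤ g x
  have hs := slope_tendsto' (line_hasDerivAt' g hdiff xbar v)
  have hub : ∀ᶠ t in 𝓝[>] (0:ℝ),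
      (g (xbar + t • v) - g (xbar + (0:ℝ) • v)) / t ≤ g x := by
    have h2 : ∀ᶠ t in 𝓝[>] (0:ℝ), t < 1 :=
      eventually_nhdsWithin_of_eventually_nhds (tendsto_id.eventually_lt_const one_pos)
    filter_upwards [self_mem_nhdsWithin, h2] with t ht0' ht1
    have ht0 : (0:ℝ) < t := ht0'
    have hc := hconv.2 (mem_univ xbar) (mem_univ x) (by linarith : (0:ℝ) ≤ 1 - t) ht0.le
      (by ring)
    have he : (1 - t) • xbar + t • x = xbar + t • v := by rw [hv]; module
    rw [he, hgxbar] at hc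
    simp only [zero_smul, add_zero, hgxbar, sub_zero]
    rw [div_le_iff₀ ht0]
    simp only [smul_eq_mul] at hc
    linarith
  have hfin : ⟪G, v⟫ ≤ g x := le_of_tendsto hs hub
  linarith
end

section
/- Let m ≥ 1, γ > 0, α > 0, δ ≥ 0, G ≥ 0 and ρ > 0 with αρ > G. Let r : ℝ^d → ℝ be G-Lipschitz, let g̃_1, …, g̃_m : ℝ^d → ℝ be such that K = {y : g̃_i(y) ≤ 0 for all i} is nonempty, closed and convex, and let x* be a minimizer of r over K. Let x ∈ ℝ^d, let x̄ be the metric projection of x onto K, and assume the error bound max_{1 ≤ i ≤ m} g̃_i(x) ≥ ρ ‖x − x̄‖ holds whenever x ∉ K. Define Ψ̄(x) = r(x) + γ ln( 1 + Σ_{i=1}^m exp( α g̃_i(x) / γ ) ) and assume Ψ̄(x) ≤ r(x*) + γ ln(m+1) + δ. Then ‖x − x̄‖ ≤ ( γ ln(m+1) + δ ) / ( αρ − G ). -/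
open scoped BigOperators

/-- Distance-to-feasibility estimate in the proof of Theorem 1: if the iterate `x` is
`δ`-suboptimal for the augmented objective, then its distance to the feasible set `K`
is at most `(γ ln(m+1) + δ)/(αρ - G)`. -/
theorem distance_to_feasible_set_bound (m d : ℕ) (hm : 1 ≤ m) (γ α δ G ρ : ℝ)
    (hγ : 0 < γ) (hα : 0 < α) (hδ : 0 ≤ δ) (hG : 0 ≤ G) (hρ : 0 < ρ)
    (hαρ : G < α * ρ)
    (r : EuclideanSpace ℝ (Fin d) → ℝ)
    (hr : ∀ a b, |r a - r b| ≤ G * ‖a - b‖)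
    (gt : Fin m → EuclideanSpace ℝ (Fin d) → ℝ)
    (K : Set (EuclideanSpace ℝ (Fin d)))
    (hK : K = {y | ∀ i, gt i y ≤ 0})
    (hKne : K.Nonempty) (hKcl : IsClosed K) (hKconv : Convex ℝ K)
    (xstar : EuclideanSpace ℝ (Fin d)) (hxstar : xstar ∈ K)
    (hmin : ∀ y ∈ K, r xstar ≤ r y)
    (x xbar : EuclideanSpace ℝ (Fin d)) (hxbar : xbar ∈ K)
    (hproj : ∀ y ∈ K, ‖x - xbar‖ ≤ ‖x - y‖)
    (herr : x ∉ K → ρ * ‖x - xbar‖ ≤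
      Finset.sup' Finset.univ ⟨⟨0, hm⟩, Finset.mem_univ _⟩ (fun i => gt i x))
    (hub : r x + γ * Real.log (1 + ∑ i, Real.exp (α * gt i x / γ)) ≤
      r xstar + γ * Real.log ((m : ℝ) + 1) + δ) :
    ‖x - xbar‖ ≤ (γ * Real.log ((m : ℝ) + 1) + δ) / (α * ρ - G) := by

  have hd : 0 < α * ρ - G := by linarith
  have hnum : 0 ≤ γ * Real.log ((m : ℝ) + 1) + δ := by
    have : (1:ℝ) ≤ (m:ℝ) + 1 := by simp [Nat.cast_nonneg]
    have := Real.log_nonneg this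
    nlinarith
  by_cases hx : x ∈ K
  · have h0 : ‖x - xbar‖ ≤ 0 := by simpa using hproj x hx
    have : ‖x - xbar‖ = 0 := le_antisymm h0 (norm_nonneg _)
    rw [this]
    exact div_nonneg hnum hd.le
  · have herr' := herr hx
    set M := Finset.sup' Finset.univ ⟨⟨0, hm⟩, Finset.mem_univ _⟩ (fun i => gt i x) with hM
    obtain ⟨j, _, hj⟩ := Finset.exists_mem_eq_sup' ⟨⟨0, hm⟩, Finset.mem_univ _⟩ (fun i => gt i x)
    -- sum lower bound
    have hMj : M = gt j x := hM.trans hj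
    have hsum : Real.exp (α * M / γ) ≤ ∑ i, Real.exp (α * gt i x / γ) := by
      rw [hMj]
      exact Finset.single_le_sum (f := fun i => Real.exp (α * gt i x / γ))
        (fun i _ => (Real.exp_pos _).le) (Finset.mem_univ j)
    have hlog : α * M / γ ≤ Real.log (1 + ∑ i, Real.exp (α * gt i x / γ)) := by
      calc α * M / γ = Real.log (Real.exp (α * M / γ)) := (Real.log_exp _).symm
        _ ≤ Real.log (1 + ∑ i, Real.exp (α * gt i x / γ)) := by
            apply Real.log_le_log (Real.exp_pos _)
            have : (0:ℝ) ≤ 1 := zero_le_one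
            linarith
    have hlog' : α * M ≤ γ * Real.log (1 + ∑ i, Real.exp (α * gt i x / γ)) := by
      have := mul_le_mul_of_nonneg_left hlog hγ.le
      rwa [mul_div_cancel₀ _ hγ.ne'] at this
    have hrx : r xstar - G * ‖x - xbar‖ ≤ r x := by
      have h1 := hr xbar x
      have h2 := hmin xbar hxbar
      have h3 : r xbar - r x ≤ G * ‖xbar - x‖ := (abs_le.mp h1).2
      have : ‖xbar - x‖ = ‖x - xbar‖ := norm_sub_rev _ _
      linarith [this ▸ h3]
    have hρM : α * (ρ * ‖x - xbar‖) ≤ α * M := mul_le_mul_of_nonneg_left herr' hα.le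
    rw [le_div_iff₀ hd]
    nlinarith [hub, hlog', hrx, hρM]
end

section
/- Let m ≥ 1, γ > 0, α > 0, δ ≥ 0, G ≥ 0 and ρ > 0 with αρ > G. Let r : ℝ^d → ℝ be G-Lipschitz, let g̃_1, …, g̃_m : ℝ^d → ℝ be such that K = {y : g̃_i(y) ≤ 0 for all i} is nonempty, closed and convex, and let x* be a minimizer of r over K. Let x ∈ ℝ^d, let x̄ be the metric projection of x onto K, and assume the error bound max_{1 ≤ i ≤ m} g̃_i(x) ≥ ρ ‖x − x̄‖ holds whenever x ∉ K. Define Ψ̄(x) = r(x) + γ ln( 1 + Σ_{i=1}^m exp( α g̃_i(x) / γ ) ) and assume Ψ̄(x) ≤ r(x*) + γ ln(m+1) + δ. Then r(x̄) − r(x*) ≤ G · ( γ ln(m+1) + δ ) / ( αρ − G ) + γ ln(m+1) + δ. -/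
open scoped BigOperators

/-- Corollary 1 (Eq. (35)): the suboptimality of the projected point `x̄ = Π_K(x)` for the
original constrained problem is controlled by the suboptimality `δ` for the augmented
problem plus the smoothing cost `γ ln(m+1)`. -/
theorem projected_point_suboptimality_bound (m d : ℕ) (hm : 1 ≤ m) (γ α δ G ρ : ℝ)
    (hγ : 0 < γ) (hα : 0 < α) (hδ : 0 ≤ δ) (hG : 0 ≤ G) (hρ : 0 < ρ)
    (hαρ : G < α * ρ)
    (r : EuclideanSpace ℝ (Fin d) → ℝ)
    (hr : ∀ a b, |r a - r b| ≤ G * ‖a - b‖)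
    (gt : Fin m → EuclideanSpace ℝ (Fin d) → ℝ)
    (K : Set (EuclideanSpace ℝ (Fin d)))
    (hK : K = {y | ∀ i, gt i y ≤ 0})
    (hKne : K.Nonempty) (hKcl : IsClosed K) (hKconv : Convex ℝ K)
    (xstar : EuclideanSpace ℝ (Fin d)) (hxstar : xstar ∈ K)
    (hmin : ∀ y ∈ K, r xstar ≤ r y)
    (x xbar : EuclideanSpace ℝ (Fin d)) (hxbar : xbar ∈ K)
    (hproj : ∀ y ∈ K, ‖x - xbar‖ ≤ ‖x - y‖)
    (herr : x ∉ K → ρ * ‖x - xbar‖ ≤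
      Finset.sup' Finset.univ ⟨⟨0, hm⟩, Finset.mem_univ _⟩ (fun i => gt i x))
    (hub : r x + γ * Real.log (1 + ∑ i, Real.exp (α * gt i x / γ)) ≤
      r xstar + γ * Real.log ((m : ℝ) + 1) + δ) :
    r xbar - r xstar ≤
      G * ((γ * Real.log ((m : ℝ) + 1) + δ) / (α * ρ - G)) +
        γ * Real.log ((m : ℝ) + 1) + δ := by
  have hm1 : (1 : ℝ) ≤ (m : ℝ) := by exact_mod_cast hm
  have hlog1 : 0 ≤ Real.log ((m : ℝ) + 1) := Real.log_nonneg (by linarith)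
  have hEnn : 0 ≤ γ * Real.log ((m : ℝ) + 1) + δ :=
    add_nonneg (mul_nonneg hγ.le hlog1) hδ
  have hsub : 0 < α * ρ - G := sub_pos.mpr hαρ
  have hsumpos : 0 < ∑ i, Real.exp (α * gt i x / γ) :=
    Finset.sum_pos (fun i _ => Real.exp_pos _) ⟨⟨0, hm⟩, Finset.mem_univ _⟩
  have hlognn : 0 ≤ Real.log (1 + ∑ i, Real.exp (α * gt i x / γ)) :=
    Real.log_nonneg (by linarith)
  have key : r xbar - r xstar ≤ γ * Real.log ((m : ℝ) + 1) + δ := by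
    by_cases hx : x ∈ K
    · have h0 : ‖x - xbar‖ ≤ 0 := by simpa using hproj x hx
      have hxx : x = xbar := by
        have h1 : ‖x - xbar‖ = 0 := le_antisymm h0 (norm_nonneg _)
        rwa [norm_eq_zero, sub_eq_zero] at h1
      rw [← hxx]
      nlinarith [mul_nonneg hγ.le hlognn]
    · have hM := herr hx
      set M := Finset.sup' Finset.univ ⟨⟨0, hm⟩, Finset.mem_univ _⟩
        (fun i => gt i x) with hMdef
      obtain ⟨i0, _, hi0⟩ := Finset.exists_mem_eq_sup'
        (⟨⟨0, hm⟩, Finset.mem_univ _⟩ : (Finset.univ : Finset (Fin m)).Nonempty)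
        (fun i => gt i x)
      have hexp : Real.exp (α * M / γ) ≤ ∑ i, Real.exp (α * gt i x / γ) := by
        rw [show M = gt i0 x from hi0]
        exact Finset.single_le_sum (f := fun i => Real.exp (α * gt i x / γ)) (fun i _ => (Real.exp_pos _).le) (Finset.mem_univ i0)
      have hlog : α * M / γ ≤ Real.log (1 + ∑ i, Real.exp (α * gt i x / γ)) := by
        have h1 : Real.exp (α * M / γ) ≤ 1 + ∑ i, Real.exp (α * gt i x / γ) := by
          linarith
        calc α * M / γ = Real.log (Real.exp (α * M / γ)) := (Real.log_exp _).symm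
          _ ≤ _ := Real.log_le_log (Real.exp_pos _) h1
      have hγlog : α * M ≤ γ * Real.log (1 + ∑ i, Real.exp (α * gt i x / γ)) := by
        have := mul_le_mul_of_nonneg_left hlog hγ.le
        rwa [mul_div_cancel₀ _ (ne_of_gt hγ)] at this
        -- fallback handled below if names differ
      have hlip : r xbar ≤ r x + G * ‖x - xbar‖ := by
        have h := hr xbar x
        have h2 := abs_le.mp h
        rw [norm_sub_rev x xbar]
        linarith [h2.1, h2.2]
      have hDnn : 0 ≤ ‖x - xbar‖ := norm_nonneg _
      have hαM : α * (ρ * ‖x - xbar‖) ≤ α * M := mul_le_mul_of_nonneg_left hM hα.le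
      nlinarith [mul_nonneg hsub.le hDnn]
  have hpos : 0 ≤ G * ((γ * Real.log ((m : ℝ) + 1) + δ) / (α * ρ - G)) :=
    mul_nonneg hG (div_nonneg hEnn hsub.le)
  linarith
end

section
/- Let E be a real inner product space, let Φ : E → ℝ be differentiable with ‖∇Φ(a) − ∇Φ(b)‖ ≤ L_Φ ‖a − b‖ for all a, b ∈ E, let r : E → ℝ be convex, let η > 0, and let P : E → E satisfy, for all u, y ∈ E, (1/(2η)) ‖P u − u‖² + r(P u) + (1/(2η)) ‖y − P u‖² ≤ (1/(2η)) ‖y − u‖² + r(y) (i.e. P is the proximal operator of ηr with its strong-optimality property). Fix x ∈ E and v ∈ E, set x⁺ = P( x − η v ), and define the exact proximal gradient mapping 𝒢_η(x) = (1/η) ( x − P( x − η ∇Φ(x) ) ). Then, with Ψ = Φ + r, Ψ(x⁺) ≤ Ψ(x) − (η/8) ‖𝒢_η(x)‖² + (3η/4) ‖v − ∇Φ(x)‖² − ( 1/(4η) − L_Φ/2 ) ‖x − x⁺‖². -/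
open scoped RealInnerProductSpace


/-- Descent lemma: quadratic upper bound for a function with Lipschitz gradient. -/
lemma descent_lemma_aux {E : Type*} [NormedAddCommGroup E] [InnerProductSpace ℝ E]
    [CompleteSpace E]
    (Φ : E → ℝ) (hΦ : Differentiable ℝ Φ) (L : ℝ)
    (hL : ∀ a b, ‖gradient Φ a - gradient Φ b‖ ≤ L * ‖a - b‖) (x y : E) :
    Φ y ≤ Φ x + ⟪gradient Φ x, y - x⟫ + L / 2 * ‖y - x‖ ^ 2 := by
  set d := y - x with hd
  have hgcont : Continuous fun a => gradient Φ a := by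
    apply (LipschitzWith.of_dist_le_mul (K := L.toNNReal) ?_).continuous
    intro a b
    simp only [dist_eq_norm]
    refine (hL a b).trans (mul_le_mul_of_nonneg_right ?_ (norm_nonneg _))
    exact Real.le_coe_toNNReal L
  have key : ∀ t : ℝ, HasDerivAt (fun t : ℝ => Φ (x + t • d))
      ⟪gradient Φ (x + t • d), d⟫ t := by
    intro t
    have h1 : HasDerivAt (fun t : ℝ => x + t • d) d t := by
      simpa using ((hasDerivAt_id t).smul_const d).const_add x
    have h2 := ((hΦ (x + t • d)).hasGradientAt).hasFDerivAt
    have := h2.comp_hasDerivAt t h1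
    have h3 : HasDerivAt (fun t : ℝ => Φ (x + t • d))
        (InnerProductSpace.toDual ℝ E (gradient Φ (x + t • d)) d) t := this
    rwa [InnerProductSpace.toDual_apply_apply] at h3
  have cont : Continuous fun t : ℝ => ⟪gradient Φ (x + t • d), d⟫ := by
    exact (hgcont.comp (by continuity)).inner continuous_const
  have hint : Φ y - Φ x = ∫ t in (0:ℝ)..1, ⟪gradient Φ (x + t • d), d⟫ := by
    have := intervalIntegral.integral_eq_sub_of_hasDerivAt
      (f := fun t : ℝ => Φ (x + t • d)) (f' := fun t => ⟪gradient Φ (x + t • d), d⟫)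
      (fun t _ => key t) (cont.intervalIntegrable 0 1)
    rw [this]
    norm_num [hd]
  have hmono : (∫ t in (0:ℝ)..1, ⟪gradient Φ (x + t • d), d⟫)
      ≤ ∫ t in (0:ℝ)..1, (⟪gradient Φ x, d⟫ + L * t * ‖d‖ ^ 2) := by
    apply intervalIntegral.integral_mono_on (by norm_num)
      (cont.intervalIntegrable 0 1) (by apply Continuous.intervalIntegrable; continuity)
    intro t ht
    have h1 : ⟪gradient Φ (x + t • d), d⟫ - ⟪gradient Φ x, d⟫
        = ⟪gradient Φ (x + t • d) - gradient Φ x, d⟫ := (inner_sub_left _ _ _).symm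
    have h2 : ⟪gradient Φ (x + t • d) - gradient Φ x, d⟫
        ≤ ‖gradient Φ (x + t • d) - gradient Φ x‖ * ‖d‖ := real_inner_le_norm _ _
    have h3 : ‖gradient Φ (x + t • d) - gradient Φ x‖ ≤ L * (t * ‖d‖) := by
      have := hL (x + t • d) x
      simpa [norm_smul, abs_of_nonneg ht.1, mul_assoc] using this
    have h4 : ‖gradient Φ (x + t • d) - gradient Φ x‖ * ‖d‖ ≤ L * t * ‖d‖ ^ 2 := by
      have := mul_le_mul_of_nonneg_right h3 (norm_nonneg d)
      calc ‖gradient Φ (x + t • d) - gradient Φ x‖ * ‖d‖ ≤ L * (t * ‖d‖) * ‖d‖ := this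
        _ = L * t * ‖d‖ ^ 2 := by ring
    linarith
  have hval : (∫ t in (0:ℝ)..1, (⟪gradient Φ x, d⟫ + L * t * ‖d‖ ^ 2))
      = ⟪gradient Φ x, d⟫ + L / 2 * ‖d‖ ^ 2 := by
    rw [intervalIntegral.integral_add (intervalIntegrable_const)
      (by apply Continuous.intervalIntegrable; continuity)]
    simp only [intervalIntegral.integral_const]
    have : (∫ t in (0:ℝ)..1, L * t * ‖d‖ ^ 2) = L / 2 * ‖d‖ ^ 2 := by
      have : (fun t : ℝ => L * t * ‖d‖ ^ 2) = fun t : ℝ => (L * ‖d‖ ^ 2) * t := by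
        funext t; ring
      rw [this, intervalIntegral.integral_const_mul, integral_id]
      ring
    rw [this]
    norm_num
  linarith [hint, hmono, hval.le, hval.ge]

lemma prox_nonexpansive {E : Type*} [NormedAddCommGroup E] [InnerProductSpace ℝ E]
    (r : E → ℝ) (η : ℝ) (hη : 0 < η) (P : E → E)
    (hP : ∀ u y : E, (1 / (2 * η)) * ‖P u - u‖ ^ 2 + r (P u) +
        (1 / (2 * η)) * ‖y - P u‖ ^ 2 ≤ (1 / (2 * η)) * ‖y - u‖ ^ 2 + r y)
    (u u' : E) : ‖P u - P u'‖ ≤ ‖u - u'‖ := by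
  have h1 := hP u (P u')
  have h2 := hP u' (P u)
  have hpos : (0:ℝ) < 1 / (2 * η) := by positivity
  have hsum : ‖P u - u‖ ^ 2 + ‖P u' - P u‖ ^ 2 + ‖P u' - u'‖ ^ 2 + ‖P u - P u'‖ ^ 2
      ≤ ‖P u' - u‖ ^ 2 + ‖P u - u'‖ ^ 2 := by
    have h3 : (1 / (2 * η)) * (‖P u - u‖ ^ 2 + ‖P u' - P u‖ ^ 2 + ‖P u' - u'‖ ^ 2
        + ‖P u - P u'‖ ^ 2) ≤ (1 / (2 * η)) * (‖P u' - u‖ ^ 2 + ‖P u - u'‖ ^ 2) := by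
      ring_nf
      ring_nf at h1 h2
      linarith
    exact (mul_le_mul_iff_right₀ hpos).mp h3
  have hinner : ⟪P u - P u', P u - P u'⟫ ≤ ⟪P u - P u', u - u'⟫ := by
    simp only [inner_sub_left, inner_sub_right] at *
    simp only [norm_sub_sq_real] at hsum
    linarith [real_inner_comm (P u) (P u'), real_inner_comm (P u) u,
      real_inner_comm (P u') u, real_inner_comm (P u) u', real_inner_comm (P u') u',
      real_inner_self_eq_norm_sq (P u), real_inner_self_eq_norm_sq (P u'),
      real_inner_self_eq_norm_sq u, real_inner_self_eq_norm_sq u']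
  have hcs : ⟪P u - P u', u - u'⟫ ≤ ‖P u - P u'‖ * ‖u - u'‖ := real_inner_le_norm _ _
  have hsq : ‖P u - P u'‖ ^ 2 ≤ ‖P u - P u'‖ * ‖u - u'‖ := by
    calc ‖P u - P u'‖ ^ 2 = ⟪P u - P u', P u - P u'⟫ := (real_inner_self_eq_norm_sq _).symm
      _ ≤ _ := le_trans hinner hcs
  rcases eq_or_lt_of_le (norm_nonneg (P u - P u')) with h | h
  · rw [← h]; exact norm_nonneg _
  · have := le_of_mul_le_mul_left (by nlinarith : ‖P u - P u'‖ * ‖P u - P u'‖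
      ≤ ‖P u - P u'‖ * ‖u - u'‖) h
    exact this

/-- Lemma 4, second inequality (Eq. (53)): per-step decrease estimate for the inexact
proximal gradient step, in terms of the exact proximal gradient mapping `𝒢_η(x)`. -/
theorem inexact_prox_gradient_descent_mapping
    {E : Type*} [NormedAddCommGroup E] [InnerProductSpace ℝ E] [CompleteSpace E]
    (Φ : E → ℝ) (hΦ : Differentiable ℝ Φ) (LΦ : ℝ)
    (hL : ∀ a b, ‖gradient Φ a - gradient Φ b‖ ≤ LΦ * ‖a - b‖)
    (r : E → ℝ) (hr : ConvexOn ℝ Set.univ r)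
    (η : ℝ) (hη : 0 < η) (P : E → E)
    (hP : ∀ u y : E, (1 / (2 * η)) * ‖P u - u‖ ^ 2 + r (P u) +
        (1 / (2 * η)) * ‖y - P u‖ ^ 2 ≤ (1 / (2 * η)) * ‖y - u‖ ^ 2 + r y)
    (x v xp : E) (hxp : xp = P (x - η • v))
    (Gx : E) (hGx : Gx = (1 / η) • (x - P (x - η • gradient Φ x))) :
    Φ xp + r xp ≤ Φ x + r x - (η / 8) * ‖Gx‖ ^ 2 +
      (3 * η / 4) * ‖v - gradient Φ x‖ ^ 2 -
        (1 / (4 * η) - LΦ / 2) * ‖x - xp‖ ^ 2 := by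
  have hη' : η ≠ 0 := ne_of_gt hη
  -- F1 : descent lemma
  have F1 : Φ xp ≤ Φ x + ⟪gradient Φ x, xp - x⟫ + LΦ / 2 * ‖x - xp‖ ^ 2 := by
    have := descent_lemma_aux Φ hΦ LΦ hL x xp
    rwa [norm_sub_rev xp x] at this
  -- F2 : prox inequality
  have F2 : 2 * ‖x - xp‖ ^ 2 + 2 * η * ⟪v, xp - x⟫ + 2 * η * r xp ≤ 2 * η * r x := by
    have hp1 := hP (x - η • v) x
    rw [← hxp] at hp1
    have ev : xp - (x - η • v) = xp - x + η • v := by abel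
    rw [ev] at hp1
    have e3 : ‖xp - x + η • v‖ ^ 2
        = ‖x - xp‖ ^ 2 + 2 * η * ⟪v, xp - x⟫ + η ^ 2 * ‖v‖ ^ 2 := by
      rw [norm_add_sq_real, real_inner_smul_right, real_inner_comm (xp - x) v,
        norm_smul, Real.norm_eq_abs, abs_of_pos hη, norm_sub_rev xp x]
      ring
    have e4 : ‖x - (x - η • v)‖ ^ 2 = η ^ 2 * ‖v‖ ^ 2 := by
      rw [sub_sub_cancel, norm_smul, Real.norm_eq_abs, abs_of_pos hη]
      ring
    rw [e3, e4] at hp1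
    have h' := mul_le_mul_of_nonneg_left hp1 (by positivity : (0:ℝ) ≤ 2 * η)
    have eL : 2 * η * (1 / (2 * η) * (‖x - xp‖ ^ 2 + 2 * η * ⟪v, xp - x⟫
          + η ^ 2 * ‖v‖ ^ 2) + r xp + 1 / (2 * η) * ‖x - xp‖ ^ 2)
        = ‖x - xp‖ ^ 2 + 2 * η * ⟪v, xp - x⟫ + η ^ 2 * ‖v‖ ^ 2 + 2 * η * r xp
          + ‖x - xp‖ ^ 2 := by
      field_simp
    have eR : 2 * η * (1 / (2 * η) * (η ^ 2 * ‖v‖ ^ 2) + r x)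
        = η ^ 2 * ‖v‖ ^ 2 + 2 * η * r x := by
      field_simp
    rw [eL, eR] at h'
    linarith
  -- F3 : Young's inequality
  have F3 : 2 * η * (⟪gradient Φ x, xp - x⟫ - ⟪v, xp - x⟫)
      ≤ η ^ 2 * ‖v - gradient Φ x‖ ^ 2 + ‖x - xp‖ ^ 2 := by
    have hcs := real_inner_le_norm (gradient Φ x - v) (xp - x)
    rw [norm_sub_rev (gradient Φ x) v, norm_sub_rev xp x] at hcs
    have hsp : ⟪gradient Φ x - v, xp - x⟫ = ⟪gradient Φ x, xp - x⟫ - ⟪v, xp - x⟫ :=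
      inner_sub_left _ _ _
    have hscale := mul_le_mul_of_nonneg_left hcs (by positivity : (0:ℝ) ≤ 2 * η)
    nlinarith [sq_nonneg (η * ‖v - gradient Φ x‖ - ‖x - xp‖)]
  -- F4 : gradient mapping identity
  have F4 : ‖x - P (x - η • gradient Φ x)‖ ^ 2 = η ^ 2 * ‖Gx‖ ^ 2 := by
    rw [hGx, norm_smul, Real.norm_eq_abs, abs_of_pos (by positivity : (0:ℝ) < 1 / η)]
    field_simp
  -- F5 : comparison via nonexpansiveness
  have F5 : ‖x - P (x - η • gradient Φ x)‖ ^ 2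
      ≤ 2 * ‖x - xp‖ ^ 2 + 2 * η ^ 2 * ‖v - gradient Φ x‖ ^ 2 := by
    have hnon := prox_nonexpansive r η hη P hP (x - η • gradient Φ x) (x - η • v)
    have ev2 : (x - η • gradient Φ x) - (x - η • v) = η • (v - gradient Φ x) := by
      rw [smul_sub]; abel
    rw [ev2, ← hxp, norm_smul, Real.norm_eq_abs, abs_of_pos hη] at hnon
    have htri : ‖x - P (x - η • gradient Φ x)‖
        ≤ ‖x - xp‖ + ‖P (x - η • gradient Φ x) - xp‖ := by
      have := dist_triangle x xp (P (x - η • gradient Φ x))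
      simp only [dist_eq_norm] at this
      calc ‖x - P (x - η • gradient Φ x)‖ ≤ ‖x - xp‖ + ‖xp - P (x - η • gradient Φ x)‖ :=
            this
        _ = ‖x - xp‖ + ‖P (x - η • gradient Φ x) - xp‖ := by rw [norm_sub_rev xp]
    have hA : ‖x - P (x - η • gradient Φ x)‖ ≤ ‖x - xp‖ + η * ‖v - gradient Φ x‖ :=
      htri.trans (by linarith)
    nlinarith [norm_nonneg (x - P (x - η • gradient Φ x)), norm_nonneg (x - xp),
      norm_nonneg (v - gradient Φ x), sq_nonneg (‖x - xp‖ - η * ‖v - gradient Φ x‖),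
      hA, mul_nonneg hη.le (norm_nonneg (v - gradient Φ x))]
  -- assemble
  have hmul : 8 * η * (Φ xp + r xp)
      ≤ 8 * η * (Φ x + r x - η / 8 * ‖Gx‖ ^ 2 + 3 * η / 4 * ‖v - gradient Φ x‖ ^ 2
        - (1 / (4 * η) - LΦ / 2) * ‖x - xp‖ ^ 2) := by
    have expand : 8 * η * (Φ x + r x - η / 8 * ‖Gx‖ ^ 2
          + 3 * η / 4 * ‖v - gradient Φ x‖ ^ 2
          - (1 / (4 * η) - LΦ / 2) * ‖x - xp‖ ^ 2)
        = 8 * η * Φ x + 8 * η * r x - η ^ 2 * ‖Gx‖ ^ 2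
          + 6 * η ^ 2 * ‖v - gradient Φ x‖ ^ 2 - 2 * ‖x - xp‖ ^ 2
          + 4 * η * LΦ * ‖x - xp‖ ^ 2 := by
      field_simp
      ring
    rw [expand]
    have S1 := mul_le_mul_of_nonneg_left F1 (by positivity : (0:ℝ) ≤ 8 * η)
    nlinarith [S1, F2, F3, F4, F5]
  exact le_of_mul_le_mul_left hmul (by positivity)
end
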